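/- arXiv:math/0505185 — 3 statements merged into one kernel-verified Lean document; each statement's English description precedes it below -/
import Mathlib

section
/- Let H be an n×n Hermitian matrix, ξ ∈ ℂⁿ a column vector, λ ∈ ℝ, and α ∈ ℂ with α ≠ 0. Let H' be the (n+2)×(n+2) Hermitian matrix in block form with blocks [[H, ξ, 0], [ξ*, λ, α], [0, ᾱ, 0]]. Then sign(H') = sign(H) and null(H') = null(H). -/
open scoped Classical
open scoped Matrix

/-- The signature of a Hermitian complex matrix: number of positive eigenvalues
minus number of negative eigenvalues (with multiplicity). -/
noncomputable def hermSign {m : Type} [Fintype m] [DecidableEq m]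
    (H : Matrix m m ℂ) : ℤ :=
  if h : H.IsHermitian then
    ((Finset.univ.filter fun i => 0 < h.eigenvalues i).card : ℤ) -
      ((Finset.univ.filter fun i => h.eigenvalues i < 0).card : ℤ)
  else 0

/-- The nullity of a Hermitian complex matrix: number of zero eigenvalues
(with multiplicity), equivalently the dimension of the kernel. -/
noncomputable def hermNull {m : Type} [Fintype m] [DecidableEq m]
    (H : Matrix m m ℂ) : ℕ :=
  if h : H.IsHermitian then
    (Finset.univ.filter fun i => h.eigenvalues i = 0).card
  else 0

open Matrix Finset Module
set_option linter.unusedSectionVars false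
set_option maxHeartbeats 1000000

namespace ElemEnl
variable {m : Type*} [Fintype m] [DecidableEq m]

noncomputable def qf (M : Matrix m m ℂ) (x : m → ℂ) : ℝ := (star x ⬝ᵥ M *ᵥ x).re

lemma qf_congr (M : Matrix m m ℂ) (P : Matrix m m ℂ) (y : m → ℂ) :
    qf M (P *ᵥ y) = qf (Pᴴ * M * P) y := by
  unfold qf
  rw [star_mulVec, ← mulVec_mulVec, ← mulVec_mulVec, dotProduct_mulVec (star y) Pᴴ]

lemma qf_smul (M : Matrix m m ℂ) (c : ℂ) (x : m → ℂ) :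
    qf M (c • x) = Complex.normSq c * qf M x := by
  unfold qf
  rw [star_smul, mulVec_smul, smul_dotProduct, dotProduct_smul, smul_eq_mul, smul_eq_mul,
    ← mul_assoc]
  rw [show star c = starRingEnd ℂ c from rfl, ← Complex.normSq_eq_conj_mul_self,
    Complex.re_ofReal_mul]

/-- submodule of functions supported on a finset -/
noncomputable def coordSub (S : Finset m) : Submodule ℂ (m → ℂ) where
  carrier := {f | ∀ i ∉ S, f i = 0}
  add_mem' := fun hf hg i hi => by simp [hf i hi, hg i hi]
  zero_mem' := fun i _ => rfl
  smul_mem' := fun c f hf i hi => by simp [hf i hi]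

lemma mem_coordSub {S : Finset m} {f : m → ℂ} : f ∈ coordSub S ↔ ∀ i ∉ S, f i = 0 := Iff.rfl

noncomputable def coordSubEquiv (S : Finset m) : coordSub S ≃ₗ[ℂ] (S → ℂ) where
  toFun f i := f.1 i
  map_add' f g := rfl
  map_smul' c f := rfl
  invFun g := ⟨fun i => if h : i ∈ S then g ⟨i, h⟩ else 0, fun i hi => dif_neg hi⟩
  left_inv f := by
    ext i
    by_cases h : i ∈ S
    · simp [h]
    · simp [h, f.2 i h]
  right_inv g := by ext i; simp

lemma finrank_coordSub (S : Finset m) : finrank ℂ (coordSub S) = S.card := by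
  rw [LinearEquiv.finrank_eq (coordSubEquiv S), Module.finrank_fintype_fun_eq_card,
    Fintype.card_coe]

variable {A : Matrix m m ℂ}

noncomputable def coordMap (hA : A.IsHermitian) : (m → ℂ) ≃ₗ[ℂ] (m → ℂ) :=
  LinearEquiv.ofLinear
    (Matrix.mulVecLin (star (hA.eigenvectorUnitary : Matrix m m ℂ)))
    (Matrix.mulVecLin (hA.eigenvectorUnitary : Matrix m m ℂ))
    (by
      rw [← Matrix.mulVecLin_mul, Unitary.coe_star_mul_self, Matrix.mulVecLin_one])
    (by
      rw [← Matrix.mulVecLin_mul, Matrix.mem_unitaryGroup_iff.mp hA.eigenvectorUnitary.2,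
        Matrix.mulVecLin_one])

lemma coordMap_apply (hA : A.IsHermitian) (x : m → ℂ) :
    coordMap hA x = (star (hA.eigenvectorUnitary : Matrix m m ℂ)) *ᵥ x := rfl

lemma coordMap_symm_apply (hA : A.IsHermitian) (x : m → ℂ) :
    (coordMap hA).symm x = (hA.eigenvectorUnitary : Matrix m m ℂ) *ᵥ x := rfl

lemma qf_eq_sum (hA : A.IsHermitian) (x : m → ℂ) :
    qf A x = ∑ i, hA.eigenvalues i * Complex.normSq (coordMap hA x i) := by
  set U : Matrix m m ℂ := (hA.eigenvectorUnitary : Matrix m m ℂ) with hU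
  set y : m → ℂ := coordMap hA x with hy
  have h1 : star x ᵥ* U = star y := by
    rw [hy, coordMap_apply, star_mulVec, star_eq_conjTranspose, conjTranspose_conjTranspose]
  have h2 : qf A x = (star y ⬝ᵥ (diagonal (RCLike.ofReal ∘ hA.eigenvalues)) *ᵥ y).re := by
    rw [qf]
    conv_lhs => rw [hA.spectral_theorem, Unitary.conjStarAlgAut_apply]
    rw [← mulVec_mulVec, ← mulVec_mulVec, dotProduct_mulVec, h1, hy, coordMap_apply]
  rw [h2, dotProduct, Complex.re_sum]
  refine Finset.sum_congr rfl fun i _ => ?_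
  · simp only [mulVec_diagonal, Function.comp_apply, Pi.star_apply, RCLike.star_def]
    rw [show ((RCLike.ofReal (hA.eigenvalues i) : ℂ)) = ((hA.eigenvalues i : ℝ) : ℂ) from rfl]
    rw [show starRingEnd ℂ (y i) * ((hA.eigenvalues i : ℝ) * y i)
        = ((hA.eigenvalues i : ℝ) : ℂ) * (starRingEnd ℂ (y i) * y i) by ring,
      ← Complex.normSq_eq_conj_mul_self, Complex.re_ofReal_mul, Complex.ofReal_re]

/-- the subspace corresponding to eigencoordinates in `S` -/
noncomputable def eigSpace (hA : A.IsHermitian) (S : Finset m) : Submodule ℂ (m → ℂ) :=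
  Submodule.comap (coordMap hA).toLinearMap (coordSub S)

lemma mem_eigSpace {hA : A.IsHermitian} {S : Finset m} {x : m → ℂ} :
    x ∈ eigSpace hA S ↔ ∀ i ∉ S, coordMap hA x i = 0 := Iff.rfl

lemma finrank_eigSpace (hA : A.IsHermitian) (S : Finset m) :
    finrank ℂ (eigSpace hA S) = S.card := by
  rw [eigSpace, Submodule.comap_equiv_eq_map_symm, LinearEquiv.finrank_map_eq, finrank_coordSub]

lemma qf_eq_sum_subset (hA : A.IsHermitian) {S : Finset m} {x : m → ℂ}
    (hx : x ∈ eigSpace hA S) :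
    qf A x = ∑ i ∈ S, hA.eigenvalues i * Complex.normSq (coordMap hA x i) := by
  rw [qf_eq_sum hA]
  exact (Finset.sum_subset (Finset.subset_univ S) (fun i _ hi => by
    rw [mem_eigSpace.mp hx i hi]; simp)).symm

lemma qf_pos_of (hA : A.IsHermitian) {S : Finset m} (hS : ∀ i ∈ S, 0 < hA.eigenvalues i)
    {x : m → ℂ} (hx : x ∈ eigSpace hA S) (hx0 : x ≠ 0) : 0 < qf A x := by
  rw [qf_eq_sum_subset hA hx]
  have hy0 : coordMap hA x ≠ 0 := fun h => hx0 (by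
    simpa using congrArg (coordMap hA).symm h)
  obtain ⟨i, hi⟩ := Function.ne_iff.mp hy0
  have hiS : i ∈ S := by
    by_contra h
    exact hi (mem_eigSpace.mp hx i h)
  refine Finset.sum_pos' (fun j hj => ?_) ⟨i, hiS, ?_⟩
  · exact mul_nonneg (hS j hj).le (Complex.normSq_nonneg _)
  · exact mul_pos (hS i hiS) (by simpa [Complex.normSq_pos] using hi)

lemma qf_neg_of (hA : A.IsHermitian) {S : Finset m} (hS : ∀ i ∈ S, hA.eigenvalues i < 0)
    {x : m → ℂ} (hx : x ∈ eigSpace hA S) (hx0 : x ≠ 0) : qf A x < 0 := by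
  rw [qf_eq_sum_subset hA hx]
  have hy0 : coordMap hA x ≠ 0 := fun h => hx0 (by
    simpa using congrArg (coordMap hA).symm h)
  obtain ⟨i, hi⟩ := Function.ne_iff.mp hy0
  have hiS : i ∈ S := by
    by_contra h
    exact hi (mem_eigSpace.mp hx i h)
  have := Finset.sum_pos' (f := fun j => -(hA.eigenvalues j * Complex.normSq (coordMap hA x j)))
    (s := S) (fun j hj => by
      simpa using mul_nonpos_of_nonpos_of_nonneg (hS j hj).le (Complex.normSq_nonneg _))
    ⟨i, hiS, by
      rw [neg_pos]
      exact mul_neg_of_neg_of_pos (hS i hiS) (Complex.normSq_pos.mpr hi)⟩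
  rw [Finset.sum_neg_distrib] at this
  linarith

lemma qf_nonneg_of (hA : A.IsHermitian) {S : Finset m} (hS : ∀ i ∈ S, 0 ≤ hA.eigenvalues i)
    {x : m → ℂ} (hx : x ∈ eigSpace hA S) : 0 ≤ qf A x := by
  rw [qf_eq_sum_subset hA hx]
  exact Finset.sum_nonneg fun j hj => mul_nonneg (hS j hj) (Complex.normSq_nonneg _)

lemma qf_nonpos_of (hA : A.IsHermitian) {S : Finset m} (hS : ∀ i ∈ S, hA.eigenvalues i ≤ 0)
    {x : m → ℂ} (hx : x ∈ eigSpace hA S) : qf A x ≤ 0 := by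
  rw [qf_eq_sum_subset hA hx]
  exact Finset.sum_nonpos fun j hj =>
    mul_nonpos_of_nonpos_of_nonneg (hS j hj) (Complex.normSq_nonneg _)

/-- abbreviations for the three eigenvalue-count invariants -/
noncomputable def posCard (hA : A.IsHermitian) : ℕ :=
  (Finset.univ.filter fun i => 0 < hA.eigenvalues i).card
noncomputable def negCard (hA : A.IsHermitian) : ℕ :=
  (Finset.univ.filter fun i => hA.eigenvalues i < 0).card
noncomputable def zeroCard (hA : A.IsHermitian) : ℕ :=
  (Finset.univ.filter fun i => hA.eigenvalues i = 0).card

lemma posCard_add_negCard_add_zeroCard (hA : A.IsHermitian) :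
    posCard hA + negCard hA + zeroCard hA = Fintype.card m := by
  classical
  have h1 : (Finset.univ.filter fun i => 0 < hA.eigenvalues i).card
      + (Finset.univ.filter fun i => ¬ 0 < hA.eigenvalues i).card = Fintype.card m := by
    rw [Finset.card_filter_add_card_filter_not]
    · exact Finset.card_univ
  have h2 : (Finset.univ.filter fun i => ¬ 0 < hA.eigenvalues i)
      = (Finset.univ.filter fun i => hA.eigenvalues i < 0)
        ∪ (Finset.univ.filter fun i => hA.eigenvalues i = 0) := by
    ext i
    simp only [Finset.mem_filter, Finset.mem_union, Finset.mem_univ, true_and, not_lt]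
    constructor
    · intro h
      rcases lt_or_eq_of_le h with h | h
      · exact Or.inl h
      · exact Or.inr h
    · rintro (h | h)
      · exact h.le
      · exact h.le
  have h3 : Disjoint (Finset.univ.filter fun i => hA.eigenvalues i < 0)
      (Finset.univ.filter fun i => hA.eigenvalues i = 0) := by
    rw [Finset.disjoint_filter]
    intro i _ h h'
    exact absurd h' (ne_of_lt h)
  rw [posCard, negCard, zeroCard, ← h1, h2, Finset.card_union_of_disjoint h3]
  omega

/-- Upper bound: a subspace on which the form is positive has dimension at most `posCard`. -/
lemma finrank_le_posCard (hA : A.IsHermitian) (W : Submodule ℂ (m → ℂ))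
    (hW : ∀ x ∈ W, x ≠ 0 → 0 < qf A x) : finrank ℂ W ≤ posCard hA := by
  classical
  set S : Finset m := Finset.univ.filter fun i => 0 < hA.eigenvalues i with hSdef
  set N : Submodule ℂ (m → ℂ) := eigSpace hA Sᶜ with hNdef
  have hdisj : W ⊓ N = ⊥ := by
    rw [eq_bot_iff]
    rintro x ⟨hxW, hxN⟩
    have hx0 : x = 0 := by
      by_contra hx0
      have h1 := hW x hxW hx0
      have h2 : qf A x ≤ 0 := qf_nonpos_of hA (S := Sᶜ) (fun i hi => by
        simp only [hSdef, Finset.mem_compl, Finset.mem_filter, Finset.mem_univ, true_and] at hi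
        exact le_of_not_gt hi) hxN
      linarith
    simp [hx0]
  have hsum := Submodule.finrank_sup_add_finrank_inf_eq W N
  rw [hdisj, finrank_bot, add_zero] at hsum
  have hle : finrank ℂ ↥(W ⊔ N) ≤ Fintype.card m := by
    have := Submodule.finrank_le (W ⊔ N)
    rwa [Module.finrank_fintype_fun_eq_card] at this
  have hN : finrank ℂ N = Sᶜ.card := finrank_eigSpace hA _
  have hcS : Sᶜ.card = Fintype.card m - S.card := by
    rw [Finset.card_compl]
  have hSle : S.card ≤ Fintype.card m := by
    simpa using Finset.card_le_univ S
  rw [posCard, ← hSdef]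
  omega

lemma finrank_le_negCard (hA : A.IsHermitian) (W : Submodule ℂ (m → ℂ))
    (hW : ∀ x ∈ W, x ≠ 0 → qf A x < 0) : finrank ℂ W ≤ negCard hA := by
  classical
  set S : Finset m := Finset.univ.filter fun i => hA.eigenvalues i < 0 with hSdef
  set N : Submodule ℂ (m → ℂ) := eigSpace hA Sᶜ with hNdef
  have hdisj : W ⊓ N = ⊥ := by
    rw [eq_bot_iff]
    rintro x ⟨hxW, hxN⟩
    have hx0 : x = 0 := by
      by_contra hx0
      have h1 := hW x hxW hx0
      have h2 : 0 ≤ qf A x := qf_nonneg_of hA (S := Sᶜ) (fun i hi => by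
        simp only [hSdef, Finset.mem_compl, Finset.mem_filter, Finset.mem_univ, true_and] at hi
        exact le_of_not_gt hi) hxN
      linarith
    simp [hx0]
  have hsum := Submodule.finrank_sup_add_finrank_inf_eq W N
  rw [hdisj, finrank_bot, add_zero] at hsum
  have hle : finrank ℂ ↥(W ⊔ N) ≤ Fintype.card m := by
    have := Submodule.finrank_le (W ⊔ N)
    rwa [Module.finrank_fintype_fun_eq_card] at this
  have hN : finrank ℂ N = Sᶜ.card := finrank_eigSpace hA _
  have hcS : Sᶜ.card = Fintype.card m - S.card := by
    rw [Finset.card_compl]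
  have hSle : S.card ≤ Fintype.card m := by
    simpa using Finset.card_le_univ S
  rw [negCard, ← hSdef]
  omega

/-- the positive eigenspace realizes `posCard` -/
noncomputable def posSpace (hA : A.IsHermitian) : Submodule ℂ (m → ℂ) :=
  eigSpace hA (Finset.univ.filter fun i => 0 < hA.eigenvalues i)
noncomputable def negSpace (hA : A.IsHermitian) : Submodule ℂ (m → ℂ) :=
  eigSpace hA (Finset.univ.filter fun i => hA.eigenvalues i < 0)

lemma finrank_posSpace (hA : A.IsHermitian) : finrank ℂ (posSpace hA) = posCard hA :=
  finrank_eigSpace hA _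
lemma finrank_negSpace (hA : A.IsHermitian) : finrank ℂ (negSpace hA) = negCard hA :=
  finrank_eigSpace hA _

lemma qf_pos_posSpace (hA : A.IsHermitian) {x : m → ℂ} (hx : x ∈ posSpace hA) (hx0 : x ≠ 0) :
    0 < qf A x :=
  qf_pos_of hA (fun i hi => (Finset.mem_filter.mp hi).2) hx hx0
lemma qf_neg_negSpace (hA : A.IsHermitian) {x : m → ℂ} (hx : x ∈ negSpace hA) (hx0 : x ≠ 0) :
    qf A x < 0 :=
  qf_neg_of hA (fun i hi => (Finset.mem_filter.mp hi).2) hx hx0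
lemma qf_nonneg_posSpace (hA : A.IsHermitian) {x : m → ℂ} (hx : x ∈ posSpace hA) :
    0 ≤ qf A x :=
  qf_nonneg_of hA (fun i hi => (Finset.mem_filter.mp hi).2.le) hx
lemma qf_nonpos_negSpace (hA : A.IsHermitian) {x : m → ℂ} (hx : x ∈ negSpace hA) :
    qf A x ≤ 0 :=
  qf_nonpos_of hA (fun i hi => (Finset.mem_filter.mp hi).2.le) hx

/-- nullity as kernel dimension -/
lemma mulVec_eq_zero_iff (hA : A.IsHermitian) (x : m → ℂ) :
    A *ᵥ x = 0 ↔ ∀ i, hA.eigenvalues i ≠ 0 → coordMap hA x i = 0 := by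
  set U : Matrix m m ℂ := (hA.eigenvectorUnitary : Matrix m m ℂ) with hU
  set y : m → ℂ := coordMap hA x with hy
  have key : A *ᵥ x = (coordMap hA).symm (diagonal (RCLike.ofReal ∘ hA.eigenvalues) *ᵥ y) := by
    rw [coordMap_symm_apply, mulVec_mulVec]
    conv_lhs => rw [hA.spectral_theorem, Unitary.conjStarAlgAut_apply]
    rw [← mulVec_mulVec, hy, coordMap_apply, ← hU]
  rw [key, LinearEquiv.map_eq_zero_iff]
  constructor
  · intro h i hi
    have := congrFun h i
    simp only [mulVec_diagonal, Function.comp_apply, Pi.zero_apply] at this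
    have h2 : ((hA.eigenvalues i : ℝ) : ℂ) ≠ 0 := by
      simpa using hi
    exact (mul_eq_zero.mp this).resolve_left h2
  · intro h
    funext i
    simp only [mulVec_diagonal, Function.comp_apply, Pi.zero_apply]
    rcases eq_or_ne (hA.eigenvalues i) 0 with h0 | h0
    · simp [h0]
    · rw [h i h0, mul_zero]

lemma ker_eq_eigSpace (hA : A.IsHermitian) :
    LinearMap.ker A.mulVecLin = eigSpace hA (Finset.univ.filter fun i => hA.eigenvalues i = 0) := by
  ext x
  rw [LinearMap.mem_ker, mulVecLin_apply, mulVec_eq_zero_iff hA, mem_eigSpace]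
  constructor
  · intro h i hi
    simp only [Finset.mem_filter, Finset.mem_univ, true_and] at hi
    exact h i hi
  · intro h i hi
    refine h i ?_
    simp only [Finset.mem_filter, Finset.mem_univ, true_and]
    exact hi

lemma zeroCard_eq_finrank_ker (hA : A.IsHermitian) :
    zeroCard hA = finrank ℂ (LinearMap.ker A.mulVecLin) := by
  rw [ker_eq_eigSpace hA, finrank_eigSpace]
  rfl

section Congruence

noncomputable def unitEquiv {P : Matrix m m ℂ} (hP : IsUnit P) : (m → ℂ) ≃ₗ[ℂ] (m → ℂ) :=
  LinearEquiv.ofLinear (Matrix.mulVecLin P) (Matrix.mulVecLin (↑hP.unit⁻¹ : Matrix m m ℂ))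
    (by rw [← Matrix.mulVecLin_mul, IsUnit.mul_val_inv, Matrix.mulVecLin_one])
    (by rw [← Matrix.mulVecLin_mul, IsUnit.val_inv_mul, Matrix.mulVecLin_one])

lemma unitEquiv_apply {P : Matrix m m ℂ} (hP : IsUnit P) (x : m → ℂ) :
    unitEquiv hP x = P *ᵥ x := rfl

lemma posCard_le_of_congr {A A' P : Matrix m m ℂ} (hA : A.IsHermitian) (hA' : A'.IsHermitian)
    (hP : IsUnit P) (h : A' = Pᴴ * A * P) : posCard hA' ≤ posCard hA := by
  rw [← finrank_posSpace hA']
  rw [← LinearEquiv.finrank_map_eq (unitEquiv hP) (posSpace hA')]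
  refine finrank_le_posCard hA _ (fun x hx hx0 => ?_)
  obtain ⟨y, hy, rfl⟩ := Submodule.mem_map.mp hx
  have hy0 : y ≠ 0 := fun h0 => hx0 (by simp [h0])
  show 0 < qf A (P *ᵥ y)
  rw [qf_congr, ← h]
  exact qf_pos_posSpace hA' hy hy0

lemma negCard_le_of_congr {A A' P : Matrix m m ℂ} (hA : A.IsHermitian) (hA' : A'.IsHermitian)
    (hP : IsUnit P) (h : A' = Pᴴ * A * P) : negCard hA' ≤ negCard hA := by
  rw [← finrank_negSpace hA']
  rw [← LinearEquiv.finrank_map_eq (unitEquiv hP) (negSpace hA')]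
  refine finrank_le_negCard hA _ (fun x hx hx0 => ?_)
  obtain ⟨y, hy, rfl⟩ := Submodule.mem_map.mp hx
  have hy0 : y ≠ 0 := fun h0 => hx0 (by simp [h0])
  show qf A (P *ᵥ y) < 0
  rw [qf_congr, ← h]
  exact qf_neg_negSpace hA' hy hy0

lemma reverse_congr {A A' P : Matrix m m ℂ} (hP : IsUnit P) (h : A' = Pᴴ * A * P) :
    A = (↑hP.unit⁻¹ : Matrix m m ℂ)ᴴ * A' * (↑hP.unit⁻¹ : Matrix m m ℂ) := by
  set Q : Matrix m m ℂ := (↑hP.unit⁻¹ : Matrix m m ℂ) with hQ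
  have hPQ : P * Q = 1 := IsUnit.mul_val_inv hP
  rw [h]
  have hstep : Qᴴ * (Pᴴ * A * P) * Q = (P * Q)ᴴ * A * (P * Q) := by
    rw [conjTranspose_mul]
    simp only [Matrix.mul_assoc]
  rw [hstep, hPQ, conjTranspose_one, Matrix.one_mul, Matrix.mul_one]

lemma posCard_congr {A A' P : Matrix m m ℂ} (hA : A.IsHermitian) (hA' : A'.IsHermitian)
    (hP : IsUnit P) (h : A' = Pᴴ * A * P) : posCard hA' = posCard hA :=
  le_antisymm (posCard_le_of_congr hA hA' hP h)
    (posCard_le_of_congr hA' hA hP.unit⁻¹.isUnit (reverse_congr hP h))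

lemma negCard_congr {A A' P : Matrix m m ℂ} (hA : A.IsHermitian) (hA' : A'.IsHermitian)
    (hP : IsUnit P) (h : A' = Pᴴ * A * P) : negCard hA' = negCard hA :=
  le_antisymm (negCard_le_of_congr hA hA' hP h)
    (negCard_le_of_congr hA' hA hP.unit⁻¹.isUnit (reverse_congr hP h))

lemma zeroCard_congr {A A' P : Matrix m m ℂ} (hA : A.IsHermitian) (hA' : A'.IsHermitian)
    (hP : IsUnit P) (h : A' = Pᴴ * A * P) : zeroCard hA' = zeroCard hA := by
  have hPH : IsUnit Pᴴ := by
    rw [Matrix.isUnit_iff_isUnit_det, Matrix.det_conjTranspose]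
    exact ((Matrix.isUnit_iff_isUnit_det P).mp hP).star
  have hinj : Function.Injective (Pᴴ *ᵥ ·) := by
    have := Matrix.mulVec_injective_iff_isUnit.mpr hPH
    exact this
  have hker : LinearMap.ker A'.mulVecLin
      = Submodule.comap (unitEquiv hP).toLinearMap (LinearMap.ker A.mulVecLin) := by
    ext x
    simp only [LinearMap.mem_ker, Submodule.mem_comap, mulVecLin_apply,
      LinearEquiv.coe_coe, unitEquiv_apply]
    rw [h]
    constructor
    · intro hx
      have : Pᴴ *ᵥ (A *ᵥ (P *ᵥ x)) = Pᴴ *ᵥ 0 := by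
        rw [mulVec_zero, ← hx, ← mulVec_mulVec, ← mulVec_mulVec]
      exact by simpa [mulVec_zero] using hinj this
    · intro hx
      rw [← mulVec_mulVec, ← mulVec_mulVec, hx, mulVec_zero]
  rw [zeroCard_eq_finrank_ker hA', zeroCard_eq_finrank_ker hA, hker,
    Submodule.comap_equiv_eq_map_symm, LinearEquiv.finrank_map_eq]

end Congruence

section Blocks
variable {k l : Type*} [Fintype k] [DecidableEq k] [Fintype l] [DecidableEq l]

noncomputable def sumEquiv (k l : Type*) : ((k ⊕ l) → ℂ) ≃ₗ[ℂ] (k → ℂ) × (l → ℂ) :=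
  LinearEquiv.sumArrowLequivProdArrow k l ℂ ℂ

lemma star_sum_elim (u : k → ℂ) (v : l → ℂ) :
    star (Sum.elim u v) = Sum.elim (star u) (star v) := by
  funext i; cases i <;> rfl

lemma qf_fromBlocks (A : Matrix k k ℂ) (D : Matrix l l ℂ) (x : (k ⊕ l) → ℂ) :
    qf (fromBlocks A 0 0 D) x = qf A (x ∘ Sum.inl) + qf D (x ∘ Sum.inr) := by
  unfold qf
  conv_lhs => rw [← Sum.elim_comp_inl_inr x]
  rw [fromBlocks_mulVec, star_sum_elim]
  simp only [Sum.elim_comp_inl, Sum.elim_comp_inr]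
  rw [zero_mulVec, zero_mulVec, add_zero, zero_add, sumElim_dotProduct_sumElim, Complex.add_re]

noncomputable def prodSpace (W1 : Submodule ℂ (k → ℂ)) (W2 : Submodule ℂ (l → ℂ)) :
    Submodule ℂ ((k ⊕ l) → ℂ) :=
  Submodule.comap (sumEquiv k l).toLinearMap (W1.prod W2)

lemma mem_prodSpace {W1 : Submodule ℂ (k → ℂ)} {W2 : Submodule ℂ (l → ℂ)} {x : (k ⊕ l) → ℂ} :
    x ∈ prodSpace W1 W2 ↔ x ∘ Sum.inl ∈ W1 ∧ x ∘ Sum.inr ∈ W2 := Iff.rfl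

def subProdEquiv {M N : Type*} [AddCommGroup M] [AddCommGroup N] [Module ℂ M] [Module ℂ N]
    (p : Submodule ℂ M) (q : Submodule ℂ N) : (p.prod q) ≃ₗ[ℂ] p × q where
  toFun x := (⟨x.1.1, x.2.1⟩, ⟨x.1.2, x.2.2⟩)
  map_add' _ _ := rfl
  map_smul' _ _ := rfl
  invFun y := ⟨(y.1.1, y.2.1), ⟨y.1.2, y.2.2⟩⟩
  left_inv _ := rfl
  right_inv _ := rfl

lemma finrank_prodSpace (W1 : Submodule ℂ (k → ℂ)) (W2 : Submodule ℂ (l → ℂ)) :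
    finrank ℂ (prodSpace W1 W2) = finrank ℂ W1 + finrank ℂ W2 := by
  rw [prodSpace, Submodule.comap_equiv_eq_map_symm, LinearEquiv.finrank_map_eq,
    LinearEquiv.finrank_eq (subProdEquiv W1 W2), Module.finrank_prod]

lemma comp_eq_zero_of_eq_zero {x : (k ⊕ l) → ℂ} (h1 : x ∘ Sum.inl = 0) (h2 : x ∘ Sum.inr = 0) :
    x = 0 := by
  funext i
  cases i with
  | inl a => exact congrFun h1 a
  | inr b => exact congrFun h2 b

variable {A : Matrix k k ℂ} {D : Matrix l l ℂ}

lemma posCard_fromBlocks_ge (hA : A.IsHermitian) (hD : D.IsHermitian)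
    (hAD : (fromBlocks A 0 0 D).IsHermitian) :
    posCard hA + posCard hD ≤ posCard hAD := by
  rw [← finrank_posSpace hA, ← finrank_posSpace hD, ← finrank_prodSpace]
  refine finrank_le_posCard hAD _ (fun x hx hx0 => ?_)
  obtain ⟨h1, h2⟩ := mem_prodSpace.mp hx
  rw [qf_fromBlocks]
  rcases eq_or_ne (x ∘ Sum.inl) 0 with h0 | h0
  · have h0' : x ∘ Sum.inr ≠ 0 := fun hc => hx0 (comp_eq_zero_of_eq_zero h0 hc)
    have := qf_pos_posSpace hD h2 h0'
    have h00 : qf A (x ∘ Sum.inl) = 0 := by rw [h0]; simp [qf]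
    linarith
  · have := qf_pos_posSpace hA h1 h0
    have := qf_nonneg_posSpace hD h2
    linarith

lemma negCard_fromBlocks_ge (hA : A.IsHermitian) (hD : D.IsHermitian)
    (hAD : (fromBlocks A 0 0 D).IsHermitian) :
    negCard hA + negCard hD ≤ negCard hAD := by
  rw [← finrank_negSpace hA, ← finrank_negSpace hD, ← finrank_prodSpace]
  refine finrank_le_negCard hAD _ (fun x hx hx0 => ?_)
  obtain ⟨h1, h2⟩ := mem_prodSpace.mp hx
  rw [qf_fromBlocks]
  rcases eq_or_ne (x ∘ Sum.inl) 0 with h0 | h0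
  · have h0' : x ∘ Sum.inr ≠ 0 := fun hc => hx0 (comp_eq_zero_of_eq_zero h0 hc)
    have := qf_neg_negSpace hD h2 h0'
    have h00 : qf A (x ∘ Sum.inl) = 0 := by rw [h0]; simp [qf]
    linarith
  · have := qf_neg_negSpace hA h1 h0
    have := qf_nonpos_negSpace hD h2
    linarith

lemma zeroCard_fromBlocks_ge (hA : A.IsHermitian) (hD : D.IsHermitian)
    (hAD : (fromBlocks A 0 0 D).IsHermitian) :
    zeroCard hA + zeroCard hD ≤ zeroCard hAD := by
  rw [zeroCard_eq_finrank_ker hA, zeroCard_eq_finrank_ker hD, zeroCard_eq_finrank_ker hAD,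
    ← finrank_prodSpace]
  refine Submodule.finrank_mono ?_
  intro x hx
  obtain ⟨h1, h2⟩ := mem_prodSpace.mp hx
  rw [LinearMap.mem_ker, mulVecLin_apply] at *
  conv_lhs => rw [← Sum.elim_comp_inl_inr x]
  rw [fromBlocks_mulVec]
  simp only [Sum.elim_comp_inl, Sum.elim_comp_inr, zero_mulVec, add_zero, zero_add]
  rw [h1, h2]
  funext i; cases i <;> rfl

lemma counts_fromBlocks (hA : A.IsHermitian) (hD : D.IsHermitian)
    (hAD : (fromBlocks A 0 0 D).IsHermitian) :
    posCard hAD = posCard hA + posCard hD ∧ negCard hAD = negCard hA + negCard hD ∧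
      zeroCard hAD = zeroCard hA + zeroCard hD := by
  have t0 := posCard_add_negCard_add_zeroCard hAD
  have t1 := posCard_add_negCard_add_zeroCard hA
  have t2 := posCard_add_negCard_add_zeroCard hD
  rw [Fintype.card_sum] at t0
  have g1 := posCard_fromBlocks_ge hA hD hAD
  have g2 := negCard_fromBlocks_ge hA hD hAD
  have g3 := zeroCard_fromBlocks_ge hA hD hAD
  omega

end Blocks

section Kmat
variable {α : ℂ}

lemma K_isHermitian (α : ℂ) : (!![0, α; starRingEnd ℂ α, 0]).IsHermitian := by
  rw [Matrix.IsHermitian]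
  ext i j
  fin_cases i <;> fin_cases j <;> simp [Matrix.conjTranspose_apply]

lemma K_isUnit (hα : α ≠ 0) : IsUnit (!![0, α; starRingEnd ℂ α, 0]) := by
  rw [Matrix.isUnit_iff_isUnit_det, Matrix.det_fin_two_of]
  simp only [zero_mul, mul_comm, zero_sub, isUnit_iff_ne_zero, ne_eq, neg_eq_zero, mul_eq_zero]
  push_neg
  exact ⟨hα, by simpa using hα⟩

lemma K_zeroCard (hα : α ≠ 0) : zeroCard (K_isHermitian α) = 0 := by
  rw [zeroCard_eq_finrank_ker]
  have hinj : Function.Injective (!![0, α; starRingEnd ℂ α, 0]).mulVecLin := by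
    exact Matrix.mulVec_injective_iff_isUnit.mpr (K_isUnit hα)
  rw [LinearMap.ker_eq_bot.mpr hinj, finrank_bot]

lemma K_qf_pos (hα : α ≠ 0) : qf !![0, α; starRingEnd ℂ α, 0] ![α, 1] = 2 * Complex.normSq α := by
  simp [qf, Matrix.mulVec, dotProduct, Fin.sum_univ_two]
  simp [Complex.normSq_apply]
  ring

lemma K_qf_neg (hα : α ≠ 0) :
    qf !![0, α; starRingEnd ℂ α, 0] ![α, -1] = -(2 * Complex.normSq α) := by
  simp [qf, Matrix.mulVec, dotProduct, Fin.sum_univ_two]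
  simp [Complex.normSq_apply]
  ring

lemma K_posCard_ge (hα : α ≠ 0) : 1 ≤ posCard (K_isHermitian α) := by
  have hv : (![α, 1] : Fin 2 → ℂ) ≠ 0 := by
    intro h
    have := congrFun h 1
    simp at this
  have h1 : finrank ℂ (Submodule.span ℂ {(![α, 1] : Fin 2 → ℂ)}) = 1 :=
    finrank_span_singleton hv
  refine le_trans (le_of_eq h1.symm) ?_
  refine finrank_le_posCard (K_isHermitian α) _ (fun x hx hx0 => ?_)
  obtain ⟨c, rfl⟩ := Submodule.mem_span_singleton.mp hx
  have hc : c ≠ 0 := fun h0 => hx0 (by simp [h0])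
  rw [qf_smul, K_qf_pos hα]
  have h2 : 0 < Complex.normSq c := Complex.normSq_pos.mpr hc
  have h3 : 0 < Complex.normSq α := Complex.normSq_pos.mpr hα
  nlinarith
  
lemma K_negCard_ge (hα : α ≠ 0) : 1 ≤ negCard (K_isHermitian α) := by
  have hv : (![α, -1] : Fin 2 → ℂ) ≠ 0 := by
    intro h
    have := congrFun h 1
    simp at this
  have h1 : finrank ℂ (Submodule.span ℂ {(![α, -1] : Fin 2 → ℂ)}) = 1 :=
    finrank_span_singleton hv
  refine le_trans (le_of_eq h1.symm) ?_
  refine finrank_le_negCard (K_isHermitian α) _ (fun x hx hx0 => ?_)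
  obtain ⟨c, rfl⟩ := Submodule.mem_span_singleton.mp hx
  have hc : c ≠ 0 := fun h0 => hx0 (by simp [h0])
  rw [qf_smul, K_qf_neg hα]
  have h2 : 0 < Complex.normSq c := Complex.normSq_pos.mpr hc
  have h3 : 0 < Complex.normSq α := Complex.normSq_pos.mpr hα
  nlinarith

lemma K_counts (hα : α ≠ 0) :
    posCard (K_isHermitian α) = 1 ∧ negCard (K_isHermitian α) = 1 ∧
      zeroCard (K_isHermitian α) = 0 := by
  have t := posCard_add_negCard_add_zeroCard (K_isHermitian α)
  simp only [Fintype.card_fin] at t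
  have := K_posCard_ge hα
  have := K_negCard_ge hα
  have := K_zeroCard hα
  omega

end Kmat

section Enlarge
variable {n : ℕ}

noncomputable def Cm (ξ : Fin n → ℂ) (α : ℂ) : Matrix (Fin 2) (Fin n) ℂ :=
  fun i j => if i = 1 then starRingEnd ℂ (ξ j) / α else 0

noncomputable def Em (lam : ℝ) (α : ℂ) : Matrix (Fin 2) (Fin 2) ℂ :=
  !![1, 0; (lam : ℂ) / (2 * α), 1]

lemma Em_det (lam : ℝ) (α : ℂ) : (Em lam α).det = 1 := by
  rw [Em, Matrix.det_fin_two_of]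
  ring

lemma P_isUnit (H : Matrix (Fin n) (Fin n) ℂ) (ξ : Fin n → ℂ) (lam : ℝ) (α : ℂ) :
    IsUnit (fromBlocks (1 : Matrix (Fin n) (Fin n) ℂ) 0 (Cm ξ α) (Em lam α)) := by
  rw [Matrix.isUnit_iff_isUnit_det, Matrix.det_fromBlocks_zero₁₂, Matrix.det_one, Em_det, mul_one]
  exact isUnit_one

lemma key_congr (H : Matrix (Fin n) (Fin n) ℂ) (ξ : Fin n → ℂ) (lam : ℝ) (α : ℂ) (hα : α ≠ 0) :
    (fromBlocks H (fun i j => if j = 0 then ξ i else 0)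
      (fun i j => if j = 0 then ξ i else 0 : Matrix (Fin n) (Fin 2) ℂ)ᴴ
      !![(lam : ℂ), α; starRingEnd ℂ α, 0])
    = (fromBlocks (1 : Matrix (Fin n) (Fin n) ℂ) 0 (Cm ξ α) (Em lam α))ᴴ
      * (fromBlocks H 0 0 !![0, α; starRingEnd ℂ α, 0])
      * (fromBlocks (1 : Matrix (Fin n) (Fin n) ℂ) 0 (Cm ξ α) (Em lam α)) := by
  have hcα : starRingEnd ℂ α ≠ 0 := by simpa using hα
  set B : Matrix (Fin n) (Fin 2) ℂ := fun i j => if j = 0 then ξ i else 0 with hB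
  set K : Matrix (Fin 2) (Fin 2) ℂ := !![0, α; starRingEnd ℂ α, 0] with hK
  set C : Matrix (Fin 2) (Fin n) ℂ := Cm ξ α with hC
  set E : Matrix (Fin 2) (Fin 2) ℂ := Em lam α with hE
  have hC0 : ∀ jj, C 0 jj = 0 := fun jj => by simp [hC, Cm]
  have hC1 : ∀ jj, C 1 jj = starRingEnd ℂ (ξ jj) / α := fun jj => by simp [hC, Cm]
  have hKC : ∀ j, (K * C) 1 j = 0 := fun j => by
    rw [Matrix.mul_apply, Fin.sum_univ_two]
    simp [hK, hC0]
  have hKE10 : (K * E) 1 0 = starRingEnd ℂ α := by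
    rw [Matrix.mul_apply, Fin.sum_univ_two]; simp [hK, hE, Em]
  have hKE11 : (K * E) 1 1 = 0 := by
    rw [Matrix.mul_apply, Fin.sum_univ_two]; simp [hK, hE, Em]
  have hKE00 : (K * E) 0 0 = (lam : ℂ) / 2 := by
    rw [Matrix.mul_apply, Fin.sum_univ_two]
    simp only [hK, hE, Em]
    simp only [Matrix.of_apply, Matrix.cons_val', Matrix.cons_val_zero, Matrix.cons_val_one,
      Matrix.head_cons, Matrix.head_fin_const, Matrix.empty_val']
    field_simp
    ring
  have hKE01 : (K * E) 0 1 = α := by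
    rw [Matrix.mul_apply, Fin.sum_univ_two]; simp [hK, hE, Em]
  have h11 : Cᴴ * (K * C) = 0 := by
    ext i j
    rw [Matrix.mul_apply, Fin.sum_univ_two]
    simp [Matrix.conjTranspose_apply, hC0, hKC]
  have h12 : Cᴴ * (K * E) = B := by
    ext i j
    rw [Matrix.mul_apply, Fin.sum_univ_two]
    fin_cases j <;>
      simp only [Fin.zero_eta, Fin.mk_one, Fin.isValue, Matrix.conjTranspose_apply,
        RCLike.star_def, ite_true, ite_false, hC0, hC1, hKE10, hKE11, hB]
    · rw [show (starRingEnd ℂ) ((starRingEnd ℂ) (ξ i) / α)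
          = ξ i / (starRingEnd ℂ) α by rw [map_div₀, Complex.conj_conj]]
      rw [div_mul_eq_mul_div, mul_div_assoc, div_self hcα, mul_one]
      simp
    · simp
  have h21 : Eᴴ * (K * C) = Bᴴ := by
    have hstep : Eᴴ * (K * C) = (Cᴴ * (Kᴴ * E))ᴴ := by
      simp only [conjTranspose_mul, conjTranspose_conjTranspose, Matrix.mul_assoc]
    rw [hstep]
    have hKh : Kᴴ = K := by
      ext i j
      fin_cases i <;> fin_cases j <;> simp [hK, Matrix.conjTranspose_apply]
    rw [hKh, h12]
  have hE00 : E 0 0 = 1 := by simp [hE, Em]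
  have hE01 : E 0 1 = 0 := by simp [hE, Em]
  have hE10 : E 1 0 = (lam : ℂ) / (2 * α) := by simp [hE, Em]
  have hE11 : E 1 1 = 1 := by simp [hE, Em]
  have h22 : Eᴴ * (K * E) = !![(lam : ℂ), α; starRingEnd ℂ α, 0] := by
    ext i j
    rw [Matrix.mul_apply, Fin.sum_univ_two]
    fin_cases i <;> fin_cases j <;>
      simp only [Fin.zero_eta, Fin.mk_one, Fin.isValue, Matrix.conjTranspose_apply,
        hKE00, hKE01, hKE10, hKE11, hE00, hE01, hE10, hE11, RCLike.star_def, _root_.map_one, _root_.map_zero,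
        one_mul, zero_mul, mul_zero, add_zero, zero_add, map_div₀, _root_.map_mul,
        Complex.conj_ofReal, map_ofNat]
    · rw [show !![(lam : ℂ), α; starRingEnd ℂ α, 0] 0 0 = (lam : ℂ) by simp]
      field_simp
      ring
    · simp
    · simp
    · simp
  rw [fromBlocks_conjTranspose, conjTranspose_one, conjTranspose_zero,
    fromBlocks_multiply, fromBlocks_multiply]
  simp only [Matrix.one_mul, Matrix.mul_one, Matrix.zero_mul, Matrix.mul_zero,
    add_zero, zero_add, Matrix.mul_assoc]
  rw [h11, h12, h21, h22]
  simp

lemma D_isHermitian (lam : ℝ) (α : ℂ) : (!![(lam : ℂ), α; starRingEnd ℂ α, 0]).IsHermitian := by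
  rw [Matrix.IsHermitian]
  ext i j
  fin_cases i <;> fin_cases j <;> simp [Matrix.conjTranspose_apply]

lemma fromBlocks_isHermitian {k l : Type*} [Fintype k] [DecidableEq k] [Fintype l] [DecidableEq l]
    {A : Matrix k k ℂ} {B : Matrix k l ℂ} {D : Matrix l l ℂ}
    (hA : A.IsHermitian) (hD : D.IsHermitian) : (fromBlocks A B Bᴴ D).IsHermitian := by
  rw [Matrix.IsHermitian, fromBlocks_conjTranspose, hA, hD, conjTranspose_conjTranspose]

end Enlarge

end ElemEnl

lemma hermSign_eq {m : Type} [Fintype m] [DecidableEq m] {A : Matrix m m ℂ}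
    (hA : A.IsHermitian) :
    hermSign A = (ElemEnl.posCard hA : ℤ) - (ElemEnl.negCard hA : ℤ) := by
  rw [hermSign, dif_pos hA]; rfl

lemma hermNull_eq {m : Type} [Fintype m] [DecidableEq m] {A : Matrix m m ℂ}
    (hA : A.IsHermitian) :
    hermNull A = ElemEnl.zeroCard hA := by
  rw [hermNull, dif_pos hA]; rfl

/-- Elementary enlargement preserves signature and nullity. -/
theorem stmt2 (n : ℕ) (H : Matrix (Fin n) (Fin n) ℂ) (hH : H.IsHermitian)
    (ξ : Fin n → ℂ) (lam : ℝ) (α : ℂ) (hα : α ≠ 0)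
    (B : Matrix (Fin n) (Fin 2) ℂ) (hB : B = fun i j => if j = 0 then ξ i else 0)
    (D : Matrix (Fin 2) (Fin 2) ℂ) (hD : D = !![(lam : ℂ), α; starRingEnd ℂ α, 0]) :
    hermSign (Matrix.fromBlocks H B Bᴴ D) = hermSign H ∧
      hermNull (Matrix.fromBlocks H B Bᴴ D) = hermNull H := by
  subst hB hD
  have hK : (!![0, α; starRingEnd ℂ α, 0]).IsHermitian := ElemEnl.K_isHermitian α
  have hDh : (!![(lam : ℂ), α; starRingEnd ℂ α, 0]).IsHermitian := ElemEnl.D_isHermitian lam α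
  have hH' : (Matrix.fromBlocks H (fun i j => if j = 0 then ξ i else 0)
      (fun i j => if j = 0 then ξ i else 0 : Matrix (Fin n) (Fin 2) ℂ)ᴴ
      !![(lam : ℂ), α; starRingEnd ℂ α, 0]).IsHermitian :=
    ElemEnl.fromBlocks_isHermitian hH hDh
  have hM : (Matrix.fromBlocks H 0 0 !![0, α; starRingEnd ℂ α, 0]).IsHermitian := by
    have h0 : (Matrix.fromBlocks H (0 : Matrix (Fin n) (Fin 2) ℂ)
        (0 : Matrix (Fin n) (Fin 2) ℂ)ᴴ !![0, α; starRingEnd ℂ α, 0]).IsHermitian :=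
      ElemEnl.fromBlocks_isHermitian hH hK
    simpa using h0
  have hP := ElemEnl.P_isUnit H ξ lam α
  have hkey := ElemEnl.key_congr H ξ lam α hα
  have hpos := ElemEnl.posCard_congr hM hH' hP hkey
  have hneg := ElemEnl.negCard_congr hM hH' hP hkey
  have hzero := ElemEnl.zeroCard_congr hM hH' hP hkey
  obtain ⟨c1, c2, c3⟩ := ElemEnl.counts_fromBlocks hH hK hM
  obtain ⟨k1, k2, k3⟩ := ElemEnl.K_counts hα
  constructor
  · rw [hermSign_eq hH', hermSign_eq hH, hpos, hneg, c1, c2, k1, k2]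
    push_cast
    ring
  · rw [hermNull_eq hH', hermNull_eq hH, hzero, c3, k3]
    omega
end

section
/- Let V, V' be finite-dimensional complex vector spaces with Hermitian forms φ, φ'. Suppose V' = V ⊕ ℂ·e for a vector e with φ'|_{V×V} = φ (i.e., φ is obtained from φ' by restriction to a codimension-1 subspace). Then |sign(φ') − sign(φ)| + |null(φ') − null(φ)| = 1. -/
open scoped Classical

open Matrix

variable {m : Type} [Fintype m] [DecidableEq m]

noncomputable def coordEquiv {H : Matrix m m ℂ} (h : H.IsHermitian) :
    (m → ℂ) ≃ₗ[ℂ] (m → ℂ) :=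
  LinearEquiv.ofLinear
    (Matrix.toLin' (star (h.eigenvectorUnitary : Matrix m m ℂ)))
    (Matrix.toLin' (h.eigenvectorUnitary : Matrix m m ℂ))
    (by
      have h1 : star (h.eigenvectorUnitary : Matrix m m ℂ) * (h.eigenvectorUnitary : Matrix m m ℂ) = 1 :=
        Matrix.mem_unitaryGroup_iff'.mp h.eigenvectorUnitary.2
      rw [← Matrix.toLin'_mul, h1, Matrix.toLin'_one])
    (by
      have h2 : (h.eigenvectorUnitary : Matrix m m ℂ) * star (h.eigenvectorUnitary : Matrix m m ℂ) = 1 :=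
        Matrix.mem_unitaryGroup_iff.mp h.eigenvectorUnitary.2
      rw [← Matrix.toLin'_mul, h2, Matrix.toLin'_one])

lemma coordEquiv_apply {H : Matrix m m ℂ} (h : H.IsHermitian) (x : m → ℂ) :
    coordEquiv h x = (star (h.eigenvectorUnitary : Matrix m m ℂ)) *ᵥ x := by
  simp [coordEquiv, Matrix.toLin'_apply]

lemma qform_eq_sum {H : Matrix m m ℂ} (h : H.IsHermitian) (x : m → ℂ) :
    (star x ⬝ᵥ (H *ᵥ x)).re =
      ∑ i, h.eigenvalues i * Complex.normSq (coordEquiv h x i) := by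
  set U := (h.eigenvectorUnitary : Matrix m m ℂ) with hU
  have hy : coordEquiv h x = star U *ᵥ x := coordEquiv_apply h x
  conv_lhs => rw [h.spectral_theorem, Unitary.conjStarAlgAut_apply]
  rw [Matrix.mul_assoc, ← Matrix.mulVec_mulVec, Matrix.dotProduct_mulVec]
  have hstar : star x ᵥ* U = star (star U *ᵥ x) := by
    rw [Matrix.star_mulVec, Matrix.star_eq_conjTranspose, conjTranspose_conjTranspose]
  rw [hstar, ← hy]
  rw [← Matrix.mulVec_mulVec, hy]
  simp only [dotProduct, Matrix.mulVec_diagonal, Pi.star_apply, Function.comp_apply,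
    Complex.re_sum]
  refine Finset.sum_congr rfl fun i _ => ?_
  set z := (star U *ᵥ x) i with hz
  rw [Complex.star_def]
  have hc : (RCLike.ofReal (h.eigenvalues i) : ℂ) = Complex.ofReal (h.eigenvalues i) := rfl
  rw [hc, show (starRingEnd ℂ) z * (Complex.ofReal (h.eigenvalues i) * z)
      = Complex.ofReal (h.eigenvalues i) * ((starRingEnd ℂ) z * z) from by ring,
    ← Complex.normSq_eq_conj_mul_self, ← Complex.ofReal_mul, Complex.ofReal_re]

lemma exists_subspace {H : Matrix m m ℂ} (h : H.IsHermitian) (s : ℝ) :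
    ∃ W : Submodule ℂ (m → ℂ),
      Module.finrank ℂ W = (Finset.univ.filter fun i => 0 < s * h.eigenvalues i).card ∧
      ∀ x ∈ W, x ≠ 0 → 0 < s * (star x ⬝ᵥ (H *ᵥ x)).re := by
  set P : (m → ℂ) →ₗ[ℂ] ({i // ¬ 0 < s * h.eigenvalues i} → ℂ) :=
    LinearMap.funLeft ℂ ℂ ((↑) : {i // ¬ 0 < s * h.eigenvalues i} → m) with hP
  have hsurj : Function.Surjective P :=
    LinearMap.funLeft_surjective_of_injective ℂ ℂ _ Subtype.val_injective
  have hrank : Module.finrank ℂ (LinearMap.ker P) +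
      Fintype.card {i // ¬ 0 < s * h.eigenvalues i} = Fintype.card m := by
    have := LinearMap.finrank_range_add_finrank_ker P
    rw [LinearMap.range_eq_top.mpr hsurj, finrank_top] at this
    simp only [Module.finrank_pi] at this
    omega
  have hcard : (Finset.univ.filter fun i => 0 < s * h.eigenvalues i).card +
      Fintype.card {i // ¬ 0 < s * h.eigenvalues i} = Fintype.card m := by
    rw [Fintype.card_subtype]
    have := Finset.card_filter_add_card_filter_not
      (s := (Finset.univ : Finset m)) (p := fun i => 0 < s * h.eigenvalues i)
    simpa [Finset.card_univ] using this
  refine ⟨(LinearMap.ker P).map ((coordEquiv h).symm : (m → ℂ) →ₗ[ℂ] (m → ℂ)), ?_, ?_⟩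
  · rw [LinearEquiv.finrank_map_eq]
    omega
  · rintro x hx hx0
    obtain ⟨y, hy, rfl⟩ := hx
    have hyx : coordEquiv h (((coordEquiv h).symm : (m → ℂ) →ₗ[ℂ] (m → ℂ)) y) = y :=
      (coordEquiv h).apply_symm_apply y
    rw [qform_eq_sum h, hyx, Finset.mul_sum]
    have hy0 : y ≠ 0 := by
      intro h0; apply hx0; rw [h0]; simp
    obtain ⟨j, hj⟩ := Function.ne_iff.mp hy0
    have hker : ∀ i : m, ¬ 0 < s * h.eigenvalues i → y i = 0 := by
      intro i hi
      have h1 := LinearMap.mem_ker.mp hy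
      have h2 := congrFun h1 ⟨i, hi⟩
      simpa [hP, LinearMap.funLeft_apply] using h2
    have hjp : 0 < s * h.eigenvalues j := by
      by_contra hc; exact hj (hker j hc)
    refine Finset.sum_pos' (fun i _ => ?_) ⟨j, Finset.mem_univ j, ?_⟩
    · by_cases hi : 0 < s * h.eigenvalues i
      · have h3 : (0:ℝ) ≤ s * h.eigenvalues i := le_of_lt hi
        rw [show s * (h.eigenvalues i * Complex.normSq (y i))
            = (s * h.eigenvalues i) * Complex.normSq (y i) from by ring]
        exact mul_nonneg h3 (Complex.normSq_nonneg _)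
      · rw [hker i hi]; simp
    · rw [show s * (h.eigenvalues j * Complex.normSq (y j))
          = (s * h.eigenvalues j) * Complex.normSq (y j) from by ring]
      have h4 : 0 < Complex.normSq (y j) := Complex.normSq_pos.mpr hj
      exact mul_pos hjp h4

lemma card_le_of_posdef {H : Matrix m m ℂ} (h : H.IsHermitian) (s : ℝ)
    (W : Submodule ℂ (m → ℂ))
    (hW : ∀ x ∈ W, x ≠ 0 → 0 < s * (star x ⬝ᵥ (H *ᵥ x)).re) :
    Module.finrank ℂ W ≤ (Finset.univ.filter fun i => 0 < s * h.eigenvalues i).card := by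
  by_contra hcon
  push_neg at hcon
  set P : (m → ℂ) →ₗ[ℂ] ({i // 0 < s * h.eigenvalues i} → ℂ) :=
    LinearMap.funLeft ℂ ℂ ((↑) : {i // 0 < s * h.eigenvalues i} → m) with hP
  have hsurj : Function.Surjective P :=
    LinearMap.funLeft_surjective_of_injective ℂ ℂ _ Subtype.val_injective
  have hrank : Module.finrank ℂ (LinearMap.ker P) +
      Fintype.card {i // 0 < s * h.eigenvalues i} = Fintype.card m := by
    have := LinearMap.finrank_range_add_finrank_ker P
    rw [LinearMap.range_eq_top.mpr hsurj, finrank_top] at this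
    simp only [Module.finrank_pi] at this
    omega
  have hcardp : Fintype.card {i // 0 < s * h.eigenvalues i}
      = (Finset.univ.filter fun i => 0 < s * h.eigenvalues i).card := by
    rw [Fintype.card_subtype]
  set Yw := W.map ((coordEquiv h) : (m → ℂ) →ₗ[ℂ] (m → ℂ)) with hYw
  have hYwrank : Module.finrank ℂ Yw = Module.finrank ℂ W :=
    LinearEquiv.finrank_map_eq (coordEquiv h) W
  have hsup : Module.finrank ℂ (Yw ⊔ LinearMap.ker P : Submodule ℂ (m → ℂ)) ≤
      Fintype.card m := by
    have := Submodule.finrank_le (Yw ⊔ LinearMap.ker P : Submodule ℂ (m → ℂ))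
    simpa [Module.finrank_pi] using this
  have hinf : 0 < Module.finrank ℂ (Yw ⊓ LinearMap.ker P : Submodule ℂ (m → ℂ)) := by
    have := Submodule.finrank_sup_add_finrank_inf_eq Yw (LinearMap.ker P)
    omega
  have hbot : (Yw ⊓ LinearMap.ker P : Submodule ℂ (m → ℂ)) ≠ ⊥ := by
    intro h0
    rw [h0, finrank_bot] at hinf
    exact lt_irrefl 0 hinf
  obtain ⟨y, hy, hy0⟩ := Submodule.exists_mem_ne_zero_of_ne_bot hbot
  obtain ⟨hyW, hyK⟩ := Submodule.mem_inf.mp hy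
  obtain ⟨x, hxW, hxy⟩ := hyW
  have hx0 : x ≠ 0 := by
    intro h0; apply hy0; rw [← hxy, h0]; simp
  have hpos := hW x hxW hx0
  have hxy' : coordEquiv h x = y := hxy
  rw [qform_eq_sum h, hxy', Finset.mul_sum] at hpos
  have hnonpos : ∀ i ∈ Finset.univ,
      s * (h.eigenvalues i * Complex.normSq (y i)) ≤ 0 := by
    intro i _
    by_cases hi : 0 < s * h.eigenvalues i
    · have hz : y i = 0 := by
        have := congrFun (LinearMap.mem_ker.mp hyK) ⟨i, hi⟩
        simpa [hP, LinearMap.funLeft_apply] using this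
      rw [hz]; simp
    · have h1 : s * h.eigenvalues i ≤ 0 := le_of_not_gt hi
      rw [show s * (h.eigenvalues i * Complex.normSq (y i))
          = (s * h.eigenvalues i) * Complex.normSq (y i) from by ring]
      exact mul_nonpos_of_nonpos_of_nonneg h1 (Complex.normSq_nonneg _)
  have := Finset.sum_nonpos hnonpos
  linarith

noncomputable def snocL (n : ℕ) : (Fin n → ℂ) →ₗ[ℂ] (Fin (n+1) → ℂ) where
  toFun x := Fin.snoc x 0
  map_add' x y := by
    funext i
    refine Fin.lastCases ?_ (fun j => ?_) i <;> simp
  map_smul' c x := by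
    funext i
    refine Fin.lastCases ?_ (fun j => ?_) i <;> simp

lemma snocL_apply {n : ℕ} (x : Fin n → ℂ) : snocL n x = Fin.snoc x 0 := rfl

lemma snocL_injective (n : ℕ) : Function.Injective (snocL n) := by
  intro x y hxy
  funext j
  have := congrFun hxy (Fin.castSucc j)
  simpa [snocL_apply] using this

lemma qform_snoc {n : ℕ} (H' : Matrix (Fin (n+1)) (Fin (n+1)) ℂ) (x : Fin n → ℂ) :
    star (snocL n x) ⬝ᵥ (H' *ᵥ (snocL n x)) =
      star x ⬝ᵥ ((H'.submatrix Fin.castSucc Fin.castSucc) *ᵥ x) := by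
  simp [snocL_apply, dotProduct, Matrix.mulVec, Fin.sum_univ_castSucc]

lemma card_sandwich {n : ℕ} {H' : Matrix (Fin (n+1)) (Fin (n+1)) ℂ} (hH' : H'.IsHermitian)
    (hH : (H'.submatrix Fin.castSucc Fin.castSucc).IsHermitian) (s : ℝ) :
    (Finset.univ.filter fun i => 0 < s * hH.eigenvalues i).card ≤
        (Finset.univ.filter fun i => 0 < s * hH'.eigenvalues i).card ∧
      (Finset.univ.filter fun i => 0 < s * hH'.eigenvalues i).card ≤
        (Finset.univ.filter fun i => 0 < s * hH.eigenvalues i).card + 1 := by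
  constructor
  · obtain ⟨W, hWr, hWp⟩ := exists_subspace hH s
    have key := card_le_of_posdef hH' s (W.map (snocL n)) ?_
    · rw [← hWr]
      refine le_trans (le_of_eq ?_) key
      exact (LinearEquiv.finrank_eq (Submodule.equivMapOfInjective _ (snocL_injective n) W))
    · rintro x' ⟨x, hxW, rfl⟩ hx0
      have hx : x ≠ 0 := by
        intro h0; apply hx0; rw [h0]; simp
      have := hWp x hxW hx
      rwa [show (star x ⬝ᵥ ((H'.submatrix Fin.castSucc Fin.castSucc) *ᵥ x))
          = star (snocL n x) ⬝ᵥ (H' *ᵥ (snocL n x)) from (qform_snoc H' x).symm] at this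
  · obtain ⟨W', hW'r, hW'p⟩ := exists_subspace hH' s
    set pr : (Fin (n+1) → ℂ) →ₗ[ℂ] ℂ := LinearMap.proj (Fin.last n) with hpr
    have hprsurj : Function.Surjective pr := by
      intro c
      exact ⟨fun _ => c, rfl⟩
    have hW0 : Module.finrank ℂ (LinearMap.ker pr) = n := by
      have h1 := LinearMap.finrank_range_add_finrank_ker pr
      rw [LinearMap.range_eq_top.mpr hprsurj, finrank_top] at h1
      simp only [Module.finrank_pi, Module.finrank_self, Fintype.card_fin] at h1
      omega
    set W'' := W' ⊓ LinearMap.ker pr with hW''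
    have hsup : Module.finrank ℂ (W' ⊔ LinearMap.ker pr : Submodule ℂ (Fin (n+1) → ℂ)) ≤
        n + 1 := by
      have := Submodule.finrank_le (W' ⊔ LinearMap.ker pr : Submodule ℂ (Fin (n+1) → ℂ))
      simpa [Module.finrank_pi] using this
    have hinf : (Finset.univ.filter fun i => 0 < s * hH'.eigenvalues i).card ≤
        Module.finrank ℂ W'' + 1 := by
      have h5 := Submodule.finrank_sup_add_finrank_inf_eq W' (LinearMap.ker pr)
      rw [← hW'', hW0, hW'r] at h5
      omega
    set π : (Fin (n+1) → ℂ) →ₗ[ℂ] (Fin n → ℂ) := LinearMap.funLeft ℂ ℂ Fin.castSucc with hπ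
    have hsnocπ : ∀ x ∈ LinearMap.ker pr, snocL n (π x) = x := by
      intro x hx
      funext i
      refine Fin.lastCases ?_ (fun j => ?_) i
      · have : x (Fin.last n) = 0 := hx
        simp [snocL_apply, this]
      · simp [snocL_apply, hπ, LinearMap.funLeft_apply]
    set W := W''.map π with hWdef
    have hWrank : Module.finrank ℂ W'' ≤ Module.finrank ℂ W := by
      have hsub : W'' ≤ W.map (snocL n) := by
        intro x hx
        have hx0 : x ∈ LinearMap.ker pr := hx.2
        exact ⟨π x, Submodule.mem_map_of_mem hx, hsnocπ x hx0⟩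
      calc Module.finrank ℂ W'' ≤ Module.finrank ℂ (W.map (snocL n)) :=
            Submodule.finrank_mono hsub
        _ = Module.finrank ℂ W :=
            (LinearEquiv.finrank_eq (Submodule.equivMapOfInjective _ (snocL_injective n) W)).symm
    have key := card_le_of_posdef hH s W ?_
    · omega
    · rintro x ⟨x'', hx''W, rfl⟩ hx0
      have hx''0 : x'' ≠ 0 := by
        intro h0; apply hx0; rw [h0]; simp
      have hsn : snocL n (π x'') = x'' := hsnocπ x'' hx''W.2
      have := hW'p x'' hx''W.1 hx''0
      rw [show (star (π x'') ⬝ᵥ ((H'.submatrix Fin.castSucc Fin.castSucc) *ᵥ (π x'')))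
          = star x'' ⬝ᵥ (H' *ᵥ x'') from by rw [← qform_snoc H' (π x''), hsn]]
      exact this

lemma count_split {k : Type} [Fintype k] (e : k → ℝ) :
    (Finset.univ.filter fun i => 0 < e i).card +
      ((Finset.univ.filter fun i => e i < 0).card +
        (Finset.univ.filter fun i => e i = 0).card) = Fintype.card k := by
  have h1 := Finset.card_filter_add_card_filter_not
    (s := (Finset.univ : Finset k)) (p := fun i => 0 < e i)
  have h2 : Finset.univ.filter (fun i => ¬ 0 < e i) =
      (Finset.univ.filter fun i => e i < 0) ∪ (Finset.univ.filter fun i => e i = 0) := by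
    ext i
    simp only [Finset.mem_filter, Finset.mem_union, Finset.mem_univ, true_and, not_lt]
    constructor
    · intro h; exact h.lt_or_eq
    · rintro (h | h)
      · exact h.le
      · exact le_of_eq h
  have h3 : Disjoint (Finset.univ.filter fun i => e i < 0)
      (Finset.univ.filter fun i => e i = 0) := by
    rw [Finset.disjoint_left]
    intro a ha hb
    rw [Finset.mem_filter] at ha hb
    rw [hb.2] at ha
    exact lt_irrefl 0 ha.2
  rw [h2, Finset.card_union_of_disjoint h3, Finset.card_univ] at h1
  omega

lemma filter_one {k : Type} [Fintype k] (e : k → ℝ) :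
    (Finset.univ.filter fun i => 0 < (1:ℝ) * e i) = (Finset.univ.filter fun i => 0 < e i) := by
  ext i; simp

lemma filter_negone {k : Type} [Fintype k] (e : k → ℝ) :
    (Finset.univ.filter fun i => 0 < (-1:ℝ) * e i) = (Finset.univ.filter fun i => e i < 0) := by
  ext i; simp [neg_mul, neg_pos]



/-- Restricting a Hermitian form to a codimension-1 subspace changes
(signature, nullity) by exactly one in total: in matrix terms, if `H` is the
top-left `n×n` principal submatrix of the `(n+1)×(n+1)` Hermitian matrix `H'`,
then `|sign H' - sign H| + |null H' - null H| = 1`. -/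
theorem stmt12 (n : ℕ) (H' : Matrix (Fin (n + 1)) (Fin (n + 1)) ℂ)
    (hH' : H'.IsHermitian) :
    |hermSign H' - hermSign (H'.submatrix Fin.castSucc Fin.castSucc)| +
      |(hermNull H' : ℤ) - (hermNull (H'.submatrix Fin.castSucc Fin.castSucc) : ℤ)| = 1 := by
  have hH : (H'.submatrix Fin.castSucc Fin.castSucc).IsHermitian := hH'.submatrix _
  obtain ⟨hp1, hp2⟩ := card_sandwich hH' hH 1
  obtain ⟨hm1, hm2⟩ := card_sandwich hH' hH (-1)
  rw [filter_one, filter_one] at hp1 hp2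
  rw [filter_negone, filter_negone] at hm1 hm2
  have htot' := count_split hH'.eigenvalues
  have htot := count_split hH.eigenvalues
  simp only [Fintype.card_fin] at htot' htot
  simp only [hermSign, hermNull, dif_pos hH', dif_pos hH]
  set P' := (Finset.univ.filter fun i => 0 < hH'.eigenvalues i).card
  set P := (Finset.univ.filter fun i => 0 < hH.eigenvalues i).card
  set M' := (Finset.univ.filter fun i => hH'.eigenvalues i < 0).card
  set M := (Finset.univ.filter fun i => hH.eigenvalues i < 0).card
  set Z' := (Finset.univ.filter fun i => hH'.eigenvalues i = 0).card
  set Z := (Finset.univ.filter fun i => hH.eigenvalues i = 0).card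
  have hpc : P' = P ∨ P' = P + 1 := by omega
  have hmc : M' = M ∨ M' = M + 1 := by omega
  rcases hpc with hpc | hpc <;> rcases hmc with hmc | hmc
  · rw [show ((P':ℤ) - M') - ((P:ℤ) - M) = 0 from by omega,
      show ((Z':ℤ) - Z) = 1 from by omega]
    simp
  · rw [show ((P':ℤ) - M') - ((P:ℤ) - M) = -1 from by omega,
      show ((Z':ℤ) - Z) = 0 from by omega]
    simp
  · rw [show ((P':ℤ) - M') - ((P:ℤ) - M) = 1 from by omega,
      show ((Z':ℤ) - Z) = 0 from by omega]
    simp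
  · rw [show ((P':ℤ) - M') - ((P:ℤ) - M) = 0 from by omega,
      show ((Z':ℤ) - Z) = -1 from by omega]
    simp
end

section
/- Let H' be an (n+1)×(n+1) Hermitian complex matrix and H its top-left n×n principal submatrix. If det(H) ≠ 0 and det(H') ≠ 0, then sign(H') = sign(H) + ε where ε = ±1, and ε = sign of the real number det(H')/det(H). -/
open scoped Classical

namespace InterlaceAux

open Matrix Finset Module

variable {ι : Type} [Fintype ι] [DecidableEq ι]

/-- The quadratic form of a matrix (real part). -/
noncomputable def Q (M : Matrix ι ι ℂ) (x : ι → ℂ) : ℝ := (star x ⬝ᵥ (M *ᵥ x)).re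

lemma Q_eq {M : Matrix ι ι ℂ} (hM : M.IsHermitian) (x : ι → ℂ) :
    Q M x = ∑ i, hM.eigenvalues i *
      Complex.normSq ((star (hM.eigenvectorUnitary : Matrix ι ι ℂ) *ᵥ x) i) := by
  set U : Matrix ι ι ℂ := (hM.eigenvectorUnitary : Matrix ι ι ℂ) with hU
  set y : ι → ℂ := star U *ᵥ x with hy
  have h1 : star x ⬝ᵥ (M *ᵥ x) = star y ⬝ᵥ
      ((Matrix.diagonal (RCLike.ofReal ∘ hM.eigenvalues)) *ᵥ y) := by
    conv_lhs => rw [hM.spectral_theorem, Unitary.conjStarAlgAut_apply, ← hU]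
    rw [← Matrix.mulVec_mulVec, ← Matrix.mulVec_mulVec, Matrix.dotProduct_mulVec (star x) U]
    congr 1
    rw [hy, Matrix.star_mulVec]
    congr 1
    simp [Matrix.star_eq_conjTranspose]
  rw [Q, h1]
  rw [dotProduct, Complex.re_sum]
  refine Finset.sum_congr rfl fun i _ => ?_
  rw [Matrix.mulVec_diagonal]
  have h2 : star y i * ((RCLike.ofReal ∘ hM.eigenvalues) i * y i)
      = ((hM.eigenvalues i * Complex.normSq (y i) : ℝ) : ℂ) := by
    have : star y i * ((RCLike.ofReal ∘ hM.eigenvalues) i * y i)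
        = (hM.eigenvalues i : ℂ) * (y i * (starRingEnd ℂ) (y i)) := by
      simp [Complex.star_def]
      ring
    rw [this, Complex.mul_conj]
    push_cast
    ring
  rw [h2, Complex.ofReal_re]

lemma finrank_le_negCount {M : Matrix ι ι ℂ} (hM : M.IsHermitian)
    (W : Submodule ℂ (ι → ℂ)) (hW : ∀ x ∈ W, x ≠ 0 → Q M x < 0) :
    Module.finrank ℂ W ≤ (Finset.univ.filter fun i => hM.eigenvalues i < 0).card := by
  set U : Matrix ι ι ℂ := (hM.eigenvectorUnitary : Matrix ι ι ℂ) with hU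
  set neg := Finset.univ.filter fun i => hM.eigenvalues i < 0 with hneg
  let φ : (ι → ℂ) →ₗ[ℂ] ({i // i ∈ neg} → ℂ) :=
    LinearMap.pi fun i => (LinearMap.proj i.1).comp (Matrix.mulVecLin (star U))
  have hφ : ∀ x i, φ x i = (star U *ᵥ x) i.1 := fun x i => rfl
  -- kernel of φ meets W trivially
  have hdisj : W ⊓ LinearMap.ker φ = ⊥ := by
    rw [Submodule.eq_bot_iff]
    rintro x ⟨hxW, hxK⟩
    by_contra hx0
    have hneg' := hW x hxW hx0
    rw [Q_eq hM x] at hneg'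
    have : (0:ℝ) ≤ ∑ i, hM.eigenvalues i * Complex.normSq ((star U *ᵥ x) i) := by
      refine Finset.sum_nonneg fun i _ => ?_
      by_cases hi : i ∈ neg
      · have : (star U *ᵥ x) i = 0 := by
          have := congrFun (LinearMap.mem_ker.mp hxK) ⟨i, hi⟩
          simpa [hφ] using this
        simp [this]
      · have : 0 ≤ hM.eigenvalues i := by
          simp only [hneg, Finset.mem_filter, Finset.mem_univ, true_and] at hi
          exact le_of_not_gt hi
        exact mul_nonneg this (Complex.normSq_nonneg _)
    linarith
  have h1 : Module.finrank ℂ (W ⊔ LinearMap.ker φ : Submodule ℂ (ι → ℂ)) +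
      Module.finrank ℂ (W ⊓ LinearMap.ker φ : Submodule ℂ (ι → ℂ)) =
      Module.finrank ℂ W + Module.finrank ℂ (LinearMap.ker φ) :=
    Submodule.finrank_sup_add_finrank_inf_eq W (LinearMap.ker φ)
  rw [hdisj, finrank_bot, add_zero] at h1
  have h2 : Module.finrank ℂ (W ⊔ LinearMap.ker φ : Submodule ℂ (ι → ℂ)) ≤ Fintype.card ι := by
    simpa [Module.finrank_fintype_fun_eq_card] using
      (Submodule.finrank_le (W ⊔ LinearMap.ker φ : Submodule ℂ (ι → ℂ)))
  have h3 := LinearMap.finrank_range_add_finrank_ker φ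
  rw [Module.finrank_fintype_fun_eq_card] at h3
  have h4 : Module.finrank ℂ (LinearMap.range φ) ≤ neg.card := by
    have := Submodule.finrank_le (LinearMap.range φ)
    rwa [Module.finrank_fintype_fun_eq_card, Fintype.card_coe] at this
  omega

lemma exists_neg_subspace {M : Matrix ι ι ℂ} (hM : M.IsHermitian) :
    ∃ W : Submodule ℂ (ι → ℂ),
      Module.finrank ℂ W = (Finset.univ.filter fun i => hM.eigenvalues i < 0).card ∧
      ∀ x ∈ W, x ≠ 0 → Q M x < 0 := by
  set U : Matrix ι ι ℂ := (hM.eigenvectorUnitary : Matrix ι ι ℂ) with hU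
  set neg := Finset.univ.filter fun i => hM.eigenvalues i < 0 with hneg
  -- the coordinate subspace supported on neg
  let ψ : (ι → ℂ) →ₗ[ℂ] ({i // i ∉ neg} → ℂ) := LinearMap.pi fun i => LinearMap.proj i.1
  have hψ : ∀ x i, ψ x i = x i.1 := fun x i => rfl
  have hψsurj : Function.Surjective ψ := by
    intro g
    refine ⟨fun j => if h : j ∈ neg then 0 else g ⟨j, h⟩, ?_⟩
    funext i
    simp [hψ, i.2]
  -- finrank of ker ψ is neg.card
  have hkercard : Module.finrank ℂ (LinearMap.ker ψ) = neg.card := by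
    have h3 := LinearMap.finrank_range_add_finrank_ker ψ
    rw [Module.finrank_fintype_fun_eq_card, LinearMap.range_eq_top.mpr hψsurj,
      finrank_top, Module.finrank_fintype_fun_eq_card, Fintype.card_subtype_compl,
      Fintype.card_coe] at h3
    have hle : neg.card ≤ Fintype.card ι := by
      simpa using Finset.card_le_card (Finset.subset_univ neg)
    omega
  -- transport by the unitary
  have hUmul : U * star U = 1 := Matrix.mem_unitaryGroup_iff.mp hM.eigenvectorUnitary.2
  have hUmul' : star U * U = 1 := Matrix.mem_unitaryGroup_iff'.mp hM.eigenvectorUnitary.2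
  let e : (ι → ℂ) ≃ₗ[ℂ] (ι → ℂ) :=
    LinearEquiv.ofLinear (Matrix.mulVecLin U) (Matrix.mulVecLin (star U))
      (by rw [← Matrix.mulVecLin_mul, hUmul, Matrix.mulVecLin_one])
      (by rw [← Matrix.mulVecLin_mul, hUmul', Matrix.mulVecLin_one])
  refine ⟨(LinearMap.ker ψ).map (e : (ι → ℂ) →ₗ[ℂ] (ι → ℂ)), ?_, ?_⟩
  · rw [LinearEquiv.finrank_map_eq, hkercard]
  · rintro x ⟨y, hy, rfl⟩ hx0
    have hxy : (e : (ι → ℂ) →ₗ[ℂ] (ι → ℂ)) y = U *ᵥ y := rfl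
    have hyx : star U *ᵥ (U *ᵥ y) = y := by
      rw [Matrix.mulVec_mulVec, hUmul', Matrix.one_mulVec]
    have hy0 : y ≠ 0 := by
      intro h; apply hx0; rw [hxy, h, Matrix.mulVec_zero]
    rw [hxy, Q_eq hM, hyx]
    obtain ⟨i0, hi0⟩ : ∃ i, y i ≠ 0 := by
      by_contra h; push_neg at h; exact hy0 (funext h)
    have hi0neg : i0 ∈ neg := by
      by_contra h
      exact hi0 (hψ y ⟨i0, h⟩ ▸ congrFun (LinearMap.mem_ker.mp hy) ⟨i0, h⟩)
    have hlt : hM.eigenvalues i0 * Complex.normSq (y i0) < 0 := by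
      have h1 : hM.eigenvalues i0 < 0 := by
        simpa [hneg] using hi0neg
      have h2 : 0 < Complex.normSq (y i0) := Complex.normSq_pos.mpr hi0
      exact mul_neg_of_neg_of_pos h1 h2
    have := Finset.sum_lt_sum (f := fun i => hM.eigenvalues i * Complex.normSq (y i))
      (g := fun _ => (0:ℝ)) (s := Finset.univ)
      (fun i _ => by
        by_cases hi : i ∈ neg
        · have h1 : hM.eigenvalues i < 0 := by simpa [hneg] using hi
          exact mul_nonpos_of_nonpos_of_nonneg h1.le (Complex.normSq_nonneg _)
        · have h0 : y i = 0 := hψ y ⟨i, hi⟩ ▸ congrFun (LinearMap.mem_ker.mp hy) ⟨i, hi⟩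
          simp [h0])
      ⟨i0, Finset.mem_univ i0, hlt⟩
    simpa using this

lemma prod_pos_iff_even {ι : Type} [Fintype ι] (f : ι → ℝ) (hf : ∀ i, f i ≠ 0) :
    (0 < ∏ i, f i ↔ Even (Finset.univ.filter fun i => f i < 0).card) := by
  classical
  set neg := Finset.univ.filter fun i => f i < 0 with hneg
  have hB : 0 < ∏ i ∈ Finset.univ.filter (fun i => ¬ f i < 0), f i :=
    Finset.prod_pos fun i hi => lt_of_le_of_ne
      (not_lt.mp (Finset.mem_filter.mp hi).2) (Ne.symm (hf i))
  have hA : 0 < ∏ i ∈ neg, (-f i) :=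
    Finset.prod_pos fun i hi => by
      have := (Finset.mem_filter.mp hi).2; linarith
  have hneg2 : ∏ i ∈ neg, f i = (-1 : ℝ) ^ neg.card * ∏ i ∈ neg, (-f i) := by
    rw [← Finset.prod_const, ← Finset.prod_mul_distrib]
    exact Finset.prod_congr rfl fun i _ => by ring
  rw [← Finset.prod_filter_mul_prod_filter_not Finset.univ (fun i => f i < 0) f, ← hneg, hneg2]
  constructor
  · intro h
    by_contra hodd
    rw [Odd.neg_one_pow (Nat.not_even_iff_odd.mp hodd)] at h
    nlinarith
  · intro he
    rw [Even.neg_one_pow he, one_mul]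
    positivity

/-- Extension of a vector by a zero last coordinate, as a linear map. -/
noncomputable def extL (n : ℕ) : (Fin n → ℂ) →ₗ[ℂ] (Fin (n + 1) → ℂ) where
  toFun x := Fin.snoc x 0
  map_add' x y := by
    funext j
    refine Fin.lastCases ?_ (fun i => ?_) j <;> simp [Fin.snoc_last, Fin.snoc_castSucc]
  map_smul' c x := by
    funext j
    refine Fin.lastCases ?_ (fun i => ?_) j <;> simp [Fin.snoc_last, Fin.snoc_castSucc]

/-- Restriction, forgetting the last coordinate. -/
noncomputable def resL (n : ℕ) : (Fin (n + 1) → ℂ) →ₗ[ℂ] (Fin n → ℂ) :=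
  LinearMap.funLeft ℂ ℂ Fin.castSucc

lemma res_ext (n : ℕ) (x : Fin n → ℂ) : resL n (extL n x) = x := by
  funext i; simp [resL, extL, LinearMap.funLeft, Fin.snoc_castSucc]

lemma ext_res (n : ℕ) (x : Fin (n + 1) → ℂ) (hx : x (Fin.last n) = 0) :
    extL n (resL n x) = x := by
  funext j
  refine Fin.lastCases ?_ (fun i => ?_) j
  · simpa [extL, resL, Fin.snoc_last] using hx.symm
  · simp [extL, resL, LinearMap.funLeft, Fin.snoc_castSucc]

lemma Q_ext {n : ℕ} (H' : Matrix (Fin (n + 1)) (Fin (n + 1)) ℂ) (x : Fin n → ℂ) :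
    Q H' (extL n x) = Q (H'.submatrix Fin.castSucc Fin.castSucc) x := by
  have : star ((Fin.snoc x 0 : Fin (n+1) → ℂ)) ⬝ᵥ (H' *ᵥ (Fin.snoc x 0 : Fin (n+1) → ℂ))
      = star x ⬝ᵥ ((H'.submatrix Fin.castSucc Fin.castSucc) *ᵥ x) := by
    simp [dotProduct, Matrix.mulVec, Fin.sum_univ_castSucc, Fin.snoc_castSucc,
      Fin.snoc_last, Matrix.submatrix_apply]
  simp only [Q, extL, LinearMap.coe_mk, AddHom.coe_mk, this]

end InterlaceAux

/-- If `H` is the top-left principal submatrix of the Hermitian matrix `H'` and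
both determinants are nonzero, the signature jumps by `ε = ±1`, the sign of the
real number `det H' / det H`. -/
theorem stmt13 (n : ℕ) (H' : Matrix (Fin (n + 1)) (Fin (n + 1)) ℂ)
    (hH' : H'.IsHermitian)
    (hdet : (H'.submatrix Fin.castSucc Fin.castSucc).det ≠ 0) (hdet' : H'.det ≠ 0) :
    hermSign H' = hermSign (H'.submatrix Fin.castSucc Fin.castSucc) +
      (if 0 < (H'.det / (H'.submatrix Fin.castSucc Fin.castSucc).det).re then 1 else -1) := by
  classical
  open InterlaceAux Finset Matrix in
  set H := H'.submatrix Fin.castSucc Fin.castSucc with hHdef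
  have hH : H.IsHermitian := hH'.submatrix Fin.castSucc
  set c' := (Finset.univ.filter fun i => hH'.eigenvalues i < 0).card with hc'
  set c := (Finset.univ.filter fun i => hH.eigenvalues i < 0).card with hc
  -- eigenvalues are nonzero
  have hne' : ∀ i, hH'.eigenvalues i ≠ 0 := by
    intro i h0
    apply hdet'
    rw [hH'.det_eq_prod_eigenvalues]
    exact Finset.prod_eq_zero (Finset.mem_univ i) (by rw [h0]; simp)
  have hne : ∀ i, hH.eigenvalues i ≠ 0 := by
    intro i h0
    apply hdet
    rw [hH.det_eq_prod_eigenvalues]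
    exact Finset.prod_eq_zero (Finset.mem_univ i) (by rw [h0]; simp)
  -- positive counts
  have hfilt' : Finset.univ.filter (fun i => ¬ 0 < hH'.eigenvalues i)
      = Finset.univ.filter (fun i => hH'.eigenvalues i < 0) := by
    ext i
    simp only [Finset.mem_filter, Finset.mem_univ, true_and, not_lt]
    exact ⟨fun h => lt_of_le_of_ne h (hne' i), le_of_lt⟩
  have hfilt : Finset.univ.filter (fun i => ¬ 0 < hH.eigenvalues i)
      = Finset.univ.filter (fun i => hH.eigenvalues i < 0) := by
    ext i
    simp only [Finset.mem_filter, Finset.mem_univ, true_and, not_lt]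
    exact ⟨fun h => lt_of_le_of_ne h (hne i), le_of_lt⟩
  have hcard' : (Finset.univ.filter fun i => 0 < hH'.eigenvalues i).card + c' = n + 1 := by
    have := Finset.card_filter_add_card_filter_not
      (s := (Finset.univ : Finset (Fin (n+1)))) (p := fun i => 0 < hH'.eigenvalues i)
    rwa [hfilt', Finset.card_univ, Fintype.card_fin, ← hc'] at this
  have hcard : (Finset.univ.filter fun i => 0 < hH.eigenvalues i).card + c = n := by
    have := Finset.card_filter_add_card_filter_not
      (s := (Finset.univ : Finset (Fin n))) (p := fun i => 0 < hH.eigenvalues i)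
    rwa [hfilt, Finset.card_univ, Fintype.card_fin, ← hc] at this
  -- interlacing part 1 : c ≤ c'
  have key1 : c ≤ c' := by
    obtain ⟨W, hWrank, hWneg⟩ := exists_neg_subspace hH
    have hW'neg : ∀ x ∈ W.map (extL n), x ≠ 0 → Q H' x < 0 := by
      rintro _ ⟨x, hx, rfl⟩ h0
      have hx0 : x ≠ 0 := fun h => h0 (by rw [h, map_zero])
      rw [Q_ext H' x]
      exact hWneg x hx hx0
    have h1 : Module.finrank ℂ W ≤ Module.finrank ℂ (W.map (extL n)) := by
      have hle : W ≤ (W.map (extL n)).map (resL n) := by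
        intro x hx
        exact ⟨extL n x, Submodule.mem_map_of_mem hx, res_ext n x⟩
      calc Module.finrank ℂ W ≤ Module.finrank ℂ ((W.map (extL n)).map (resL n)) :=
            Submodule.finrank_mono hle
        _ ≤ Module.finrank ℂ (W.map (extL n)) := Submodule.finrank_map_le _ _
    have h2 := finrank_le_negCount hH' (W.map (extL n)) hW'neg
    rw [hc, hc', ← hWrank]
    exact le_trans h1 h2
  -- interlacing part 2 : c' ≤ c + 1
  have key2 : c' ≤ c + 1 := by
    obtain ⟨N, hNrank, hNneg⟩ := exists_neg_subspace hH'
    set pr : (Fin (n+1) → ℂ) →ₗ[ℂ] ℂ :=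
      LinearMap.proj (R := ℂ) (φ := fun _ : Fin (n+1) => ℂ) (Fin.last n) with hpr
    have hKrank : n ≤ Module.finrank ℂ (LinearMap.ker pr) := by
      have h3 := LinearMap.finrank_range_add_finrank_ker pr
      rw [Module.finrank_fintype_fun_eq_card, Fintype.card_fin] at h3
      have h4 : Module.finrank ℂ (LinearMap.range pr) ≤ 1 := by
        simpa [Module.finrank_self] using Submodule.finrank_le (LinearMap.range pr)
      omega
    have hsup : Module.finrank ℂ (N ⊔ (LinearMap.ker pr) : Submodule ℂ (Fin (n+1) → ℂ)) ≤ n + 1 := by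
      simpa [Module.finrank_fintype_fun_eq_card] using
        Submodule.finrank_le (N ⊔ (LinearMap.ker pr) : Submodule ℂ (Fin (n+1) → ℂ))
    have h5 := Submodule.finrank_sup_add_finrank_inf_eq N (LinearMap.ker pr)
    rw [hNrank, ← hc'] at h5
    -- restricted subspace is negative for H
    have hWneg : ∀ x ∈ (N ⊓ (LinearMap.ker pr)).map (resL n), x ≠ 0 → Q H x < 0 := by
      rintro _ ⟨x, hx, rfl⟩ h0
      have hxK : x (Fin.last n) = 0 := LinearMap.mem_ker.mp hx.2
      have hx0 : x ≠ 0 := fun h => h0 (by rw [h, map_zero])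
      have hQ := hNneg x hx.1 hx0
      have : Q H (resL n x) = Q H' x := by
        rw [hHdef, ← Q_ext H' (resL n x), ext_res n x hxK]
      rw [this]
      exact hQ
    have h2 := finrank_le_negCount hH ((N ⊓ (LinearMap.ker pr)).map (resL n)) hWneg
    have h1 : Module.finrank ℂ (N ⊓ (LinearMap.ker pr) : Submodule ℂ (Fin (n+1) → ℂ)) ≤
        Module.finrank ℂ (((N ⊓ (LinearMap.ker pr)).map (resL n)).map (extL n)) := by
      refine Submodule.finrank_mono fun x hx => ?_
      exact ⟨resL n x, Submodule.mem_map_of_mem hx,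
        ext_res n x (LinearMap.mem_ker.mp hx.2)⟩
    have h1' := Submodule.finrank_map_le (extL n) ((N ⊓ (LinearMap.ker pr)).map (resL n))
    rw [← hc] at h2
    omega
  -- determinant signs
  set P' := ∏ i, hH'.eigenvalues i with hP'def
  set P := ∏ i, hH.eigenvalues i with hPdef
  have hdE' : H'.det = (P' : ℂ) := by
    rw [hH'.det_eq_prod_eigenvalues]; norm_cast
  have hdE : H.det = (P : ℂ) := by
    rw [hH.det_eq_prod_eigenvalues]; norm_cast
  have hre : (H'.det / H.det).re = P' / P := by
    rw [hdE', hdE, ← Complex.ofReal_div, Complex.ofReal_re]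
  have hP'pos := prod_pos_iff_even hH'.eigenvalues hne'
  have hPpos := prod_pos_iff_even hH.eigenvalues hne
  have hP'ne : P' ≠ 0 := Finset.prod_ne_zero_iff.mpr fun i _ => hne' i
  have hPne : P ≠ 0 := Finset.prod_ne_zero_iff.mpr fun i _ => hne i
  rw [hermSign, dif_pos hH', hermSign, dif_pos hH, hre]
  rcases Nat.lt_or_ge c' (c + 1) with hlt | hge
  · have hcc : c' = c := by omega
    have hiff : 0 < P' ↔ 0 < P := by
      rw [hP'pos, hPpos, ← hc', ← hc, hcc]
    have hpos : 0 < P' / P := by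
      rcases lt_trichotomy P 0 with h1 | h1 | h1
      · have h2 : P' < 0 := by
          rcases lt_trichotomy P' 0 with h3 | h3 | h3
          · exact h3
          · exact absurd h3 hP'ne
          · exact absurd (hiff.mp h3) (not_lt.mpr h1.le)
        exact div_pos_iff.mpr (Or.inr ⟨h2, h1⟩)
      · exact absurd h1 hPne
      · exact div_pos_iff.mpr (Or.inl ⟨hiff.mpr h1, h1⟩)
    rw [if_pos hpos]
    rw [← hc', ← hc] at *
    push_cast
    omega
  · have hcc : c' = c + 1 := by omega
    have hiff : 0 < P' ↔ ¬ 0 < P := by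
      rw [hP'pos, hPpos, ← hc', ← hc, hcc, Nat.even_add_one]
    have hneg : ¬ 0 < P' / P := by
      rcases lt_trichotomy P 0 with h1 | h1 | h1
      · have h2 : 0 < P' := hiff.mpr (not_lt.mpr h1.le)
        exact not_lt.mpr (le_of_lt (div_neg_of_pos_of_neg h2 h1))
      · exact absurd h1 hPne
      · have h2 : P' < 0 := by
          rcases lt_trichotomy P' 0 with h3 | h3 | h3
          · exact h3
          · exact absurd h3 hP'ne
          · exact absurd h1 (hiff.mp h3)
        exact not_lt.mpr (le_of_lt (div_neg_of_neg_of_pos h2 h1))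
    rw [if_neg hneg]
    rw [← hc', ← hc] at *
    push_cast
    omega
end
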